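/- Under the active-set hypotheses, if in addition β ≥ 1 and γ ∈ (0, 1], then Σ_{t=1}^{T} 1(Q_t = 1)·1(w_t > γ)·2w_t ≤ 68·(β/γ)·e_{f⋆}(F, γ/2). -/

import Mathlib

open scoped ENNReal

/-- `x` is `ζ`-dependent (with respect to `F` and `f⋆`) on the finite subsequence of the
sequence `z` indexed by `S`. -/
def ZetaDep {X : Type*} (F : Set (X → ℝ)) (fstar : X → ℝ) (ζ : ℝ)
    (z : ℕ → X) (S : Finset ℕ) (x : X) : Prop :=
  ∀ f ∈ F, (∑ i ∈ S, (f (z i) - fstar (z i)) ^ 2 ≤ ζ ^ 2) → |f x - fstar x| ≤ ζ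

/-- `ĕ_{f⋆}(F, ζ)`: the length of the longest sequence each of whose elements is
`ζ`-independent of all its predecessors (valued in `ℝ≥0∞`). -/
noncomputable def eluderLenAt {X : Type*} (F : Set (X → ℝ)) (fstar : X → ℝ)
    (ζ : ℝ) : ℝ≥0∞ :=
  ⨆ z : ℕ → X, ⨆ m : ℕ,
    ⨆ _ : ∀ i < m, ¬ ZetaDep F fstar ζ z (Finset.range i) (z i), (m : ℝ≥0∞)

/-- The value function eluder dimension `e_{f⋆}(F, ζ₀) = sup_{ζ ≥ ζ₀} ĕ_{f⋆}(F, ζ)`. -/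
noncomputable def eluderDim {X : Type*} (F : Set (X → ℝ)) (fstar : X → ℝ)
    (ζ₀ : ℝ) : ℝ≥0∞ :=
  ⨆ ζ : ℝ, ⨆ _ : ζ₀ ≤ ζ, eluderLenAt F fstar ζ

/-- The width of the set `G` of functions at a point `x`:
`w(x) = sup_{f, f' ∈ G} |f x - f' x|`. -/
noncomputable def width {X : Type*} (G : Set (X → ℝ)) (x : X) : ℝ :=
  sSup {r : ℝ | ∃ f ∈ G, ∃ f' ∈ G, r = |f x - f' x|}


lemma sum_inv_sqrt_le (n : ℕ) :
    ∑ k ∈ Finset.Icc 1 n, 1 / Real.sqrt k ≤ 2 * Real.sqrt n := by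
  induction n with
  | zero => simp
  | succ n ih =>
    rw [Finset.sum_Icc_succ_top (by omega)]
    have h1 : Real.sqrt n ≥ 0 := Real.sqrt_nonneg _
    have h2 : Real.sqrt (n+1) > 0 := Real.sqrt_pos.2 (by positivity)
    have e1 : Real.sqrt n ^ 2 = (n:ℝ) := Real.sq_sqrt (by positivity)
    have e2 : Real.sqrt ((n:ℕ)+1 : ℕ) ^ 2 = ((n:ℝ)+1) := by
      push_cast; exact Real.sq_sqrt (by positivity)
    have key : 1 / Real.sqrt ((n+1 : ℕ)) + 2 * Real.sqrt n ≤ 2 * Real.sqrt ((n+1:ℕ)) := by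
      rw [div_add' _ _ _ (by push_cast at e2 ⊢; nlinarith), div_le_iff₀ (by push_cast at e2 ⊢; nlinarith)]
      push_cast at e2 ⊢
      nlinarith [sq_nonneg (Real.sqrt n - Real.sqrt ((n:ℝ)+1))]
    push_cast at key ⊢
    linarith [ih]

open Classical in
lemma counting {X : Type*} (F : Set (X → ℝ))
    (fstar : X → ℝ)
    (T : ℕ) (x : ℕ → X) (Q : ℕ → ℝ) (hQ : ∀ t, Q t = 0 ∨ Q t = 1)
    (β : ℝ) (hβ1 : 1 ≤ β)
    (Fs : ℕ → Set (X → ℝ)) (hFsub : ∀ t, Fs t ⊆ F) (hFstar : ∀ t, fstar ∈ Fs t)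
    (hFbound : ∀ t, 1 ≤ t → t ≤ T → ∀ f ∈ Fs t,
      ∑ i ∈ Finset.Icc 1 (t - 1), Q i * (f (x i) - fstar (x i)) ^ 2 ≤ 4 * β)
    (ε : ℝ) (hε0 : 0 < ε) (hε1 : ε ≤ 1)
    (D : ℝ) (hD0 : 0 ≤ D)
    (hDbound : ∀ (m : ℕ) (z : ℕ → X),
      (∀ i < m, ¬ ZetaDep F fstar (ε/2) z (Finset.range i) (z i)) → (m : ℝ) ≤ D) :
    ((((Finset.Icc 1 T).filter (fun t => Q t = 1 ∧ ε < width (Fs t) (x t))).card : ℝ)) * ε ^ 2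
      ≤ 17 * β * D := by
  set W := (Finset.Icc 1 T).filter (fun t => Q t = 1 ∧ ε < width (Fs t) (x t)) with hW
  have hβ0 : (0:ℝ) < β := lt_of_lt_of_le one_pos hβ1
  -- witness extraction
  have hwit : ∀ t ∈ W, ∃ g ∈ Fs t, ε / 2 < |g (x t) - fstar (x t)| := by
    intro t ht
    rw [hW, Finset.mem_filter] at ht
    obtain ⟨-, -, hwidth⟩ := ht
    have hne : {r : ℝ | ∃ f ∈ Fs t, ∃ f' ∈ Fs t, r = |f (x t) - f' (x t)|}.Nonempty :=
      ⟨0, fstar, hFstar t, fstar, hFstar t, by simp⟩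
    obtain ⟨r, ⟨f, hf, f', hf', hr⟩, hrε⟩ := exists_lt_of_lt_csSup hne hwidth
    subst hr
    have htri : |f (x t) - f' (x t)| ≤ |f (x t) - fstar (x t)| + |f' (x t) - fstar (x t)| := by
      have := abs_sub_abs_le_abs_sub (f (x t)) (f' (x t))
      calc |f (x t) - f' (x t)| = |(f (x t) - fstar (x t)) - (f' (x t) - fstar (x t))| := by ring_nf
        _ ≤ _ := abs_sub _ _
    rcases le_or_gt |f (x t) - fstar (x t)| (ε/2) with h | h
    · exact ⟨f', hf', by linarith⟩
    · exact ⟨f, hf, h⟩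
  -- choose witnesses
  choose gfun hg1 hg2 using hwit
  let g : ℕ → (X → ℝ) := fun t => if h : t ∈ W then gfun t h else fstar
  have hg1' : ∀ t ∈ W, g t ∈ Fs t := fun t ht => by simp only [g, dif_pos ht]; exact hg1 t ht
  have hg2' : ∀ t ∈ W, ε / 2 < |g t (x t) - fstar (x t)| := fun t ht => by
    simp only [g, dif_pos ht]; exact hg2 t ht
  set val : ℕ → ℕ → ℝ := fun t i => (g t (x i) - fstar (x i)) ^ 2 with hval
  set K : ℕ := ⌈16 * β / ε ^ 2⌉₊ with hKdef
  have hK1 : 16 * β / ε ^ 2 ≤ (K : ℝ) := Nat.le_ceil _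
  have hK2 : (K : ℝ) ≤ 16 * β / ε ^ 2 + 1 := le_of_lt (Nat.ceil_lt_add_one (by positivity))
  have hKpos : 0 < K := Nat.ceil_pos.2 (by positivity)
  set ζ2 : ℝ := ε ^ 2 / 4 with hζ2
  -- bucket assignment
  set step : (ℕ → ℕ) → ℕ → ℕ := fun a t =>
    if h : ∃ j, (∑ i ∈ (W.filter (· < t)).filter (fun i => a i = j), val t i) ≤ ζ2 ∧ j < K
    then h.choose else 0 with hstep
  set A : ℕ → ℕ → ℕ := fun n => Nat.rec (fun _ => 0)
    (fun t ih => Function.update ih t (step ih t)) n with hA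
  set buck : ℕ → ℕ := fun t => A (t + 1) t with hbuckdef
  have hcoh : ∀ n i, i < n → A n i = buck i := by
    intro n
    induction n with
    | zero => omega
    | succ n ih =>
      intro i hi
      rcases Nat.lt_succ_iff_lt_or_eq.1 hi with h | h
      · have : A (n+1) i = A n i := by
          show Function.update (A n) n (step (A n) n) i = A n i
          exact Function.update_of_ne (by omega) _ _
        rw [this, ih i h]
      · subst h; rfl
  have hbuckeq : ∀ t, buck t = step (A t) t := by
    intro t
    show Function.update (A t) t (step (A t) t) t = step (A t) t
    exact Function.update_self _ _ _
  -- step with A t equals step with buck on the relevant filter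
  have hfilter_eq : ∀ t j, (W.filter (· < t)).filter (fun i => A t i = j)
      = (W.filter (· < t)).filter (fun i => buck i = j) := by
    intro t j
    apply Finset.filter_congr
    intro i hi
    rw [Finset.mem_filter] at hi
    rw [hcoh t i hi.2]
  -- key property of buckets
  set fib : ℕ → ℕ → Finset ℕ := fun t j => (W.filter (· < t)).filter (fun i => buck i = j)
    with hfib
  have hWIcc : ∀ t ∈ W, 1 ≤ t ∧ t ≤ T := by
    intro t ht
    rw [hW, Finset.mem_filter, Finset.mem_Icc] at ht
    exact ⟨ht.1.1, ht.1.2⟩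
  have hWQ : ∀ t ∈ W, Q t = 1 := by
    intro t ht; rw [hW, Finset.mem_filter] at ht; exact ht.2.1
  have hvalnonneg : ∀ t i, 0 ≤ val t i := fun t i => sq_nonneg _
  have htotal : ∀ t ∈ W, ∑ i ∈ W.filter (· < t), val t i ≤ 4 * β := by
    intro t ht
    have hsub : W.filter (· < t) ⊆ Finset.Icc 1 (t - 1) := by
      intro i hi
      rw [Finset.mem_filter] at hi
      have := (hWIcc i hi.1).1
      rw [Finset.mem_Icc]
      omega
    have h1 : ∑ i ∈ W.filter (· < t), val t i
        = ∑ i ∈ W.filter (· < t), Q i * val t i := by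
      apply Finset.sum_congr rfl
      intro i hi
      rw [hWQ i (Finset.mem_filter.1 hi).1, one_mul]
    rw [h1]
    calc ∑ i ∈ W.filter (· < t), Q i * val t i
        ≤ ∑ i ∈ Finset.Icc 1 (t-1), Q i * val t i := by
          apply Finset.sum_le_sum_of_subset_of_nonneg hsub
          intro i _ _
          rcases hQ i with h | h <;> rw [h] <;> simp [hvalnonneg t i]
      _ ≤ 4 * β := hFbound t (hWIcc t ht).1 (hWIcc t ht).2 (g t) (hg1' t ht)
  have hbuck : ∀ t, t ∈ W → buck t < K ∧ ∑ i ∈ fib t (buck t), val t i ≤ ζ2 := by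
    intro t
    induction t using Nat.strong_induction_on with
    | _ t IH =>
      intro ht
      have hex : ∃ j, (∑ i ∈ (W.filter (· < t)).filter (fun i => A t i = j), val t i) ≤ ζ2
          ∧ j < K := by
        by_contra hne
        push_neg at hne
        have hfibgt : ∀ j < K, ζ2 < ∑ i ∈ fib t j, val t i := by
          intro j hj
          have := hne j
          rw [hfilter_eq t j] at this
          rcases lt_or_ge ζ2 (∑ i ∈ fib t j, val t i) with h | h
          · exact h
          · exact absurd hj (not_lt.2 (this h))
        have hmaps : ∀ i ∈ W.filter (· < t), buck i ∈ Finset.range K := by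
          intro i hi
          rw [Finset.mem_filter] at hi
          exact Finset.mem_range.2 (IH i hi.2 hi.1).1
        have hpart : ∑ j ∈ Finset.range K, ∑ i ∈ fib t j, val t i
            = ∑ i ∈ W.filter (· < t), val t i :=
          Finset.sum_fiberwise_of_maps_to hmaps _
        have hlower : (K : ℝ) * ζ2 < ∑ j ∈ Finset.range K, ∑ i ∈ fib t j, val t i := by
          have : ∑ j ∈ Finset.range K, ζ2 < ∑ j ∈ Finset.range K, ∑ i ∈ fib t j, val t i := by
            apply Finset.sum_lt_sum_of_nonempty (by simp [Finset.nonempty_range_iff]; omega)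
            intro j hj
            exact hfibgt j (Finset.mem_range.1 hj)
          simpa using this
        have hKζ : 4 * β ≤ (K : ℝ) * ζ2 := by
          have : 16 * β / ε ^ 2 * ζ2 ≤ (K:ℝ) * ζ2 :=
            mul_le_mul_of_nonneg_right hK1 (by positivity)
          calc 4 * β = 16 * β / ε ^ 2 * ζ2 := by
                field_simp [hζ2]; ring
            _ ≤ (K:ℝ) * ζ2 := this
        have := htotal t ht
        rw [← hpart] at this
        linarith
      -- now buck t = hex.choose
      have hbt : buck t = hex.choose := by
        rw [hbuckeq t, hstep]
        simp only [dif_pos hex]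
      have hspec := hex.choose_spec
      rw [hfilter_eq t hex.choose] at hspec
      rw [hbt]
      exact ⟨hspec.2, hspec.1⟩
  -- each fiber is a ζ-independent sequence, hence has card ≤ D
  have hfibcard : ∀ j, ((W.filter (fun s => buck s = j)).card : ℝ) ≤ D := by
    intro j
    set B := W.filter (fun s => buck s = j) with hB
    obtain ⟨m, hm⟩ : ∃ m, B.card = m := ⟨B.card, rfl⟩
    set e := B.orderIsoOfFin hm with he
    set z : ℕ → X := fun k => if h : k < m then x ((e ⟨k, h⟩ : {s // s ∈ B}) : ℕ) else x 0
      with hz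
    have hindep : ∀ i < m, ¬ ZetaDep F fstar (ε/2) z (Finset.range i) (z i) := by
      intro i hi hdep
      set t : ℕ := ((e ⟨i, hi⟩ : {s // s ∈ B}) : ℕ) with htdef
      have htB : t ∈ B := (e ⟨i, hi⟩).2
      have htW : t ∈ W := (Finset.mem_filter.1 htB).1
      have htj : buck t = j := by
        have := (Finset.mem_filter.1 htB).2
        simpa using this
      have hzi : z i = x t := by rw [hz]; simp only [dif_pos hi]; rfl
      -- the sum over predecessors equals the fiber sum
      have hsum : ∑ k ∈ Finset.range i, (g t (z k) - fstar (z k)) ^ 2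
          = ∑ s ∈ fib t j, val t s := by
        apply Finset.sum_bij (i := fun k hk =>
          ((e ⟨k, lt_trans (Finset.mem_range.1 hk) hi⟩ : {s // s ∈ B}) : ℕ))
        · intro k hk
          have hk' : k < i := Finset.mem_range.1 hk
          have hmem : ((e ⟨k, lt_trans hk' hi⟩ : {s // s ∈ B}) : ℕ) ∈ B :=
            (e ⟨k, lt_trans hk' hi⟩).2
          have hlt : ((e ⟨k, lt_trans hk' hi⟩ : {s // s ∈ B}) : ℕ) < t := by
            rw [htdef]
            have h2 : (⟨k, lt_trans hk' hi⟩ : Fin m) < ⟨i, hi⟩ := by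
              simp only [Fin.mk_lt_mk]; exact hk'
            exact (e.lt_iff_lt.2 h2)
          rw [hfib, Finset.mem_filter, Finset.mem_filter]
          have hBW := Finset.mem_filter.1 hmem
          refine ⟨⟨hBW.1, hlt⟩, by simpa using hBW.2⟩
        · intro a ha b hb hab
          have h3 : (⟨a, lt_trans (Finset.mem_range.1 ha) hi⟩ : Fin m)
              = ⟨b, lt_trans (Finset.mem_range.1 hb) hi⟩ := by
            apply e.injective
            exact Subtype.ext hab
          simpa using congrArg Fin.val h3
        · intro s hs
          rw [hfib, Finset.mem_filter, Finset.mem_filter] at hs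
          have hsB : s ∈ B := by
            rw [hB, Finset.mem_filter]
            exact ⟨hs.1.1, hs.2⟩
          set k : Fin m := e.symm ⟨s, hsB⟩ with hk
          have hek : ((e k : {s // s ∈ B}) : ℕ) = s := by rw [hk]; simp
          have hki : (k : ℕ) < i := by
            have hlt : (⟨s, hsB⟩ : {s // s ∈ B}) < e ⟨i, hi⟩ := by
              rw [← Subtype.coe_lt_coe]
              exact hs.1.2
            have h4 := e.symm.lt_iff_lt.2 hlt
            rw [OrderIso.symm_apply_apply] at h4
            rw [hk]
            exact h4
          refine ⟨(k : ℕ), Finset.mem_range.2 hki, ?_⟩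
          have h5 : (⟨(k:ℕ), lt_trans hki hi⟩ : Fin m) = k := by simp
          rw [h5, hek]
        · intro k hk
          have hk' : k < i := Finset.mem_range.1 hk
          have hzk : z k = x ((e ⟨k, lt_trans hk' hi⟩ : {s // s ∈ B}) : ℕ) := by
            rw [hz]; simp only [dif_pos (lt_trans hk' hi)]
          rw [hzk, hval]
      -- apply dependence to the witness g t
      have hgt := hdep (g t) (hFsub t (hg1' t htW))
      rw [hsum, hzi] at hgt
      have hfibsum : ∑ s ∈ fib t j, val t s ≤ (ε/2) ^ 2 := by
        have h6 := (hbuck t htW).2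
        rw [htj] at h6
        calc ∑ s ∈ fib t j, val t s ≤ ζ2 := h6
          _ = (ε/2)^2 := by rw [hζ2]; ring
      exact absurd (hgt hfibsum) (not_le.2 (hg2' t htW))
    calc ((W.filter (fun s => buck s = j)).card : ℝ) = (m : ℝ) := by rw [← hB, hm]
      _ ≤ D := hDbound m z hindep
  -- finish: card W ≤ K * D
  have hcardsum : W.card = ∑ j ∈ Finset.range K, (W.filter (fun s => buck s = j)).card := by
    apply Finset.card_eq_sum_card_fiberwise
    intro t ht
    exact Finset.mem_range.2 (hbuck t ht).1
  have hcard : (W.card : ℝ) ≤ (K : ℝ) * D := by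
    rw [hcardsum]
    push_cast
    calc ∑ j ∈ Finset.range K, ((W.filter (fun s => buck s = j)).card : ℝ)
        ≤ ∑ j ∈ Finset.range K, D := Finset.sum_le_sum (fun j _ => hfibcard j)
      _ = (K : ℝ) * D := by rw [Finset.sum_const, Finset.card_range]; simp [nsmul_eq_mul]
  calc (W.card : ℝ) * ε ^ 2 ≤ (K : ℝ) * D * ε ^ 2 :=
        mul_le_mul_of_nonneg_right hcard (by positivity)
    _ ≤ (16 * β / ε ^ 2 + 1) * D * ε ^ 2 := by
        apply mul_le_mul_of_nonneg_right _ (by positivity)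
        exact mul_le_mul_of_nonneg_right hK2 hD0
    _ = 16 * β * D + ε ^ 2 * D := by field_simp
    _ ≤ 16 * β * D + 1 * D := by
        have h7 : ε ^ 2 ≤ 1 := by nlinarith
        nlinarith [mul_le_mul_of_nonneg_right h7 hD0]
    _ ≤ 17 * β * D := by nlinarith [mul_le_mul_of_nonneg_right hβ1 hD0]

open Classical in
theorem stmt_15 {X : Type*} (F : Set (X → ℝ))
    (hFb : ∀ f ∈ F, ∀ v, f v ∈ Set.Icc (0 : ℝ) 1)
    (fstar : X → ℝ) (hstar : fstar ∈ F)
    (T : ℕ) (x : ℕ → X) (Q : ℕ → ℝ) (hQ : ∀ t, Q t = 0 ∨ Q t = 1)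
    (β : ℝ) (hβ : 0 < β) (hβ1 : 1 ≤ β)
    (Fs : ℕ → Set (X → ℝ)) (hFsub : ∀ t, Fs t ⊆ F) (hFstar : ∀ t, fstar ∈ Fs t)
    (hFbound : ∀ t, 1 ≤ t → t ≤ T → ∀ f ∈ Fs t,
      ∑ i ∈ Finset.Icc 1 (t - 1), Q i * (f (x i) - fstar (x i)) ^ 2 ≤ 4 * β)
    (γ : ℝ) (hγ0 : 0 < γ) (hγ1 : γ ≤ 1) :
    ENNReal.ofReal (∑ t ∈ Finset.Icc 1 T,
        if Q t = 1 ∧ γ < width (Fs t) (x t) then 2 * width (Fs t) (x t) else 0)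
      ≤ ENNReal.ofReal (68 * β / γ) * eluderDim F fstar (γ / 2) := by
  classical
  set w : ℕ → ℝ := fun t => width (Fs t) (x t) with hwdef
  have hwle1 : ∀ t, w t ≤ 1 := by
    intro t
    apply Real.sSup_le
    · rintro r ⟨f, hf, f', hf', rfl⟩
      have h1 := hFb f (hFsub t hf) (x t)
      have h2 := hFb f' (hFsub t hf') (x t)
      rw [Set.mem_Icc] at h1 h2
      rw [abs_le]; constructor <;> linarith
    · norm_num
  set d := eluderDim F fstar (γ/2) with hd
  by_cases hdtop : d = ⊤
  · rw [hdtop, ENNReal.mul_top]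
    · exact le_top
    · rw [Ne, ENNReal.ofReal_eq_zero, not_le]
      positivity
  set D := d.toReal with hD
  have hD0 : 0 ≤ D := ENNReal.toReal_nonneg
  have hDbound : ∀ ζ, γ/2 ≤ ζ → ∀ (m : ℕ) (z : ℕ → X),
      (∀ i < m, ¬ ZetaDep F fstar ζ z (Finset.range i) (z i)) → (m : ℝ) ≤ D := by
    intro ζ hζ m z hind
    have h1 : (m : ℝ≥0∞) ≤ eluderLenAt F fstar ζ := by
      rw [eluderLenAt]
      exact le_iSup_of_le z (le_iSup_of_le m (le_iSup_of_le hind le_rfl))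
    have h2 : eluderLenAt F fstar ζ ≤ d := by
      rw [hd, eluderDim]
      exact le_iSup_of_le ζ (le_iSup_of_le hζ le_rfl)
    have h3 := ENNReal.toReal_mono hdtop (h1.trans h2)
    simpa using h3
  have hcount : ∀ ε, γ ≤ ε → ε ≤ 1 →
      (((Finset.Icc 1 T).filter (fun t => Q t = 1 ∧ ε < w t)).card : ℝ) * ε ^ 2
        ≤ 17 * β * D := by
    intro ε hγε hε1
    exact counting F fstar T x Q hQ β hβ1 Fs hFsub hFstar hFbound ε
      (lt_of_lt_of_le hγ0 hγε) hε1 D hD0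
      (fun m z h => hDbound (ε/2) (by linarith) m z h)
  set W := (Finset.Icc 1 T).filter (fun t => Q t = 1 ∧ γ < w t) with hWdef
  have hcount' : ∀ ε, γ ≤ ε → ε ≤ 1 →
      ((W.filter (fun t => ε < w t)).card : ℝ) * ε ^ 2 ≤ 17 * β * D := by
    intro ε hγε hε1
    have heq : W.filter (fun t => ε < w t)
        = (Finset.Icc 1 T).filter (fun t => Q t = 1 ∧ ε < w t) := by
      rw [hWdef, Finset.filter_filter]
      apply Finset.filter_congr
      intro t _
      constructor
      · rintro ⟨⟨h1, _⟩, h3⟩; exact ⟨h1, h3⟩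
      · rintro ⟨h1, h3⟩; exact ⟨⟨h1, lt_of_le_of_lt hγε h3⟩, h3⟩
    rw [heq]
    exact hcount ε hγε hε1
  set Areal := 17 * β * D with hA
  have hA0 : 0 ≤ Areal := by positivity
  have key : ∀ n (W' : Finset ℕ), W' ⊆ W → W'.card = n →
      ∑ t ∈ W', w t ≤ Real.sqrt Areal * ∑ k ∈ Finset.Icc 1 n, 1 / Real.sqrt k := by
    intro n
    induction n with
    | zero =>
      intro W' _ hc
      rw [Finset.card_eq_zero.1 hc]
      simp
    | succ n ih =>
      intro W' hsub hc
      have hne : W'.Nonempty := Finset.card_pos.1 (by omega)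
      obtain ⟨t0, ht0, hmin⟩ := Finset.exists_min_image W' w hne
      have ht0W : t0 ∈ W := hsub ht0
      have hγv : γ < w t0 := by
        rw [hWdef, Finset.mem_filter] at ht0W
        exact ht0W.2.2
      have hv1 : w t0 ≤ 1 := hwle1 t0
      have hv0 : 0 ≤ w t0 := le_of_lt (lt_trans hγ0 hγv)
      have hn1 : (0:ℝ) < (n:ℝ) + 1 := by positivity
      have hnv : ((n:ℝ) + 1) * w t0 ^ 2 ≤ Areal := by
        by_contra hcon
        push_neg at hcon
        have hsq : Real.sqrt (Areal / ((n:ℝ)+1)) < w t0 := by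
          rw [Real.sqrt_lt' (lt_of_le_of_lt hγ0.le hγv)]
          rw [div_lt_iff₀ hn1]
          linarith
        set c := max γ (Real.sqrt (Areal / ((n:ℝ)+1))) with hc'
        have hcv : c < w t0 := max_lt hγv hsq
        set ε := (c + w t0) / 2 with hε'
        have hcε : c < ε := by rw [hε']; linarith
        have hεv : ε < w t0 := by rw [hε']; linarith
        have hγε : γ ≤ ε := le_trans (le_max_left _ _) hcε.le
        have hε1 : ε ≤ 1 := by linarith
        have hsubf : W' ⊆ W.filter (fun t => ε < w t) := by
          intro t ht
          rw [Finset.mem_filter]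
          exact ⟨hsub ht, lt_of_lt_of_le hεv (hmin t ht)⟩
        have hcard : ((n:ℝ) + 1) ≤ ((W.filter (fun t => ε < w t)).card : ℝ) := by
          have h6 := Finset.card_le_card hsubf
          rw [hc] at h6
          exact_mod_cast h6
        have h5 := hcount' ε hγε hε1
        have hε2 : Areal / ((n:ℝ)+1) < ε ^ 2 := by
          have h7 : Real.sqrt (Areal / ((n:ℝ)+1)) < ε :=
            lt_of_le_of_lt (le_max_right _ _) hcε
          have h8 : 0 ≤ Areal / ((n:ℝ)+1) := by positivity
          nlinarith [Real.sq_sqrt h8, Real.sqrt_nonneg (Areal / ((n:ℝ)+1))]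
        have hεsq : 0 ≤ ε ^ 2 := sq_nonneg _
        have h13 : Areal < ε ^ 2 * ((n:ℝ)+1) := (div_lt_iff₀ hn1).1 hε2
        nlinarith [mul_le_mul_of_nonneg_right hcard hεsq]
      have hvle : w t0 ≤ Real.sqrt Areal * (1 / Real.sqrt ((n:ℝ)+1)) := by
        have h9 : w t0 ≤ Real.sqrt (Areal / ((n:ℝ)+1)) := by
          rw [Real.le_sqrt hv0 (by positivity)]
          rw [le_div_iff₀ hn1]
          linarith
        rw [Real.sqrt_div hA0] at h9
        calc w t0 ≤ Real.sqrt Areal / Real.sqrt ((n:ℝ)+1) := h9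
          _ = Real.sqrt Areal * (1 / Real.sqrt ((n:ℝ)+1)) := by ring
      have hIH := ih (W'.erase t0) (Finset.Subset.trans (Finset.erase_subset _ _) hsub)
        (by rw [Finset.card_erase_of_mem ht0]; omega)
      have hsplit : ∑ t ∈ W', w t = w t0 + ∑ t ∈ W'.erase t0, w t :=
        (Finset.add_sum_erase W' w ht0).symm
      have hIcc : Finset.Icc 1 (n+1) = insert (n+1) (Finset.Icc 1 n) := by
        ext k
        simp only [Finset.mem_Icc, Finset.mem_insert]
        omega
      rw [hsplit, hIcc, Finset.sum_insert (by simp), mul_add]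
      push_cast
      have : (1:ℝ) / Real.sqrt ((n:ℝ)+1) ≤ 1 / Real.sqrt ((n:ℝ)+1) := le_rfl
      have hfin : w t0 ≤ Real.sqrt Areal * (1 / Real.sqrt (↑n + 1)) := by
        convert hvle using 3
      linarith [hIH]
  -- assemble
  have hWfull : W.filter (fun t => γ < w t) = W := by
    apply Finset.filter_true_of_mem
    intro t ht
    rw [hWdef, Finset.mem_filter] at ht
    exact ht.2.2
  have hNb : (W.card : ℝ) * γ ^ 2 ≤ Areal := by
    have := hcount' γ le_rfl hγ1
    rw [hWfull] at this
    exact this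
  have hsum : ∑ t ∈ W, w t ≤ Real.sqrt Areal * (2 * Real.sqrt W.card) := by
    refine le_trans (key W.card W Finset.Subset.rfl rfl) ?_
    exact mul_le_mul_of_nonneg_left (sum_inv_sqrt_le _) (Real.sqrt_nonneg _)
  have hsqrtN : Real.sqrt (W.card) ≤ Real.sqrt Areal / γ := by
    have h10 : (W.card : ℝ) ≤ Areal / γ ^ 2 := by
      rw [le_div_iff₀ (by positivity)]
      exact hNb
    calc Real.sqrt (W.card) ≤ Real.sqrt (Areal / γ ^ 2) := Real.sqrt_le_sqrt h10
      _ = Real.sqrt Areal / γ := by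
          rw [Real.sqrt_div hA0, Real.sqrt_sq hγ0.le]
  have hfinal : ∑ t ∈ W, w t ≤ 2 * Areal / γ := by
    have h11 : Real.sqrt Areal * (2 * Real.sqrt W.card)
        ≤ Real.sqrt Areal * (2 * (Real.sqrt Areal / γ)) := by
      apply mul_le_mul_of_nonneg_left _ (Real.sqrt_nonneg _)
      linarith
    have h12 : Real.sqrt Areal * (2 * (Real.sqrt Areal / γ)) = 2 * Areal / γ := by
      rw [show Real.sqrt Areal * (2 * (Real.sqrt Areal / γ))
        = 2 * (Real.sqrt Areal * Real.sqrt Areal) / γ by ring, Real.mul_self_sqrt hA0]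
    linarith
  have hLHS : (∑ t ∈ Finset.Icc 1 T,
      if Q t = 1 ∧ γ < width (Fs t) (x t) then 2 * width (Fs t) (x t) else 0)
      = ∑ t ∈ W, 2 * w t := by
    rw [hWdef, Finset.sum_filter]
  have hLHS2 : ∑ t ∈ W, 2 * w t ≤ 68 * β * D / γ := by
    rw [← Finset.mul_sum]
    calc 2 * ∑ t ∈ W, w t ≤ 2 * (2 * Areal / γ) := by linarith
      _ = 68 * β * D / γ := by rw [hA]; ring
  rw [hLHS]
  calc ENNReal.ofReal (∑ t ∈ W, 2 * w t) ≤ ENNReal.ofReal (68 * β * D / γ) :=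
        ENNReal.ofReal_le_ofReal hLHS2
    _ = ENNReal.ofReal (68 * β / γ * D) := by ring_nf
    _ = ENNReal.ofReal (68 * β / γ) * ENNReal.ofReal D :=
        ENNReal.ofReal_mul (by positivity)
    _ = ENNReal.ofReal (68 * β / γ) * d := by
        rw [hD, ENNReal.ofReal_toReal hdtop]
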